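/- For every permutation σ of {1,2}, every i ∈ {1,2}, and every non-negative integer n, F_σ(n) = (F_σ(n) ∩ V_i) ⊕ (F_σ(n) ∩ W_{σ̄(i)}). -/
import Mathlib


open Submodule

/-- For a permutation `σ` of `{1,2}`, the increasing sequence of subspaces `F_σ(n)`:
`F_σ(0) = ⊥`, `F_σ(n+1) = Σ_i (F_σ(n) + Vᵢ) ⊓ (F_σ(n) + W_{σ(i)})`. -/
noncomputable def Fsig {K E : Type*} [Field K] [AddCommGroup E] [Module K E]
    (V W : Fin 2 → Submodule K E) (σ : Equiv.Perm (Fin 2)) : ℕ → Submodule K E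
  | 0 => ⊥
  | n + 1 => ⨆ i : Fin 2, (Fsig V W σ n ⊔ V i) ⊓ (Fsig V W σ n ⊔ W (σ i))

/-- If `F = (F ⊓ A) + (F ⊓ D)` and `F = (F ⊓ B) + (F ⊓ C)` with `A, B` disjoint and
`C, D` disjoint, then by counting dimensions the first sum is direct. -/
lemma Fsig.dim_disjoint {K E : Type*} [Field K] [AddCommGroup E] [Module K E]
    [FiniteDimensional K E] {F A B C D : Submodule K E}
    (hAB : Disjoint A B) (hCD : Disjoint C D)
    (h1 : (F ⊓ A) ⊔ (F ⊓ D) = F) (h2 : (F ⊓ B) ⊔ (F ⊓ C) = F) :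
    Disjoint (F ⊓ A) (F ⊓ D) := by
  have e1 : Module.finrank K ↥((F ⊓ A) ⊔ (F ⊓ D)) + Module.finrank K ↥((F ⊓ A) ⊓ (F ⊓ D))
      = Module.finrank K ↥(F ⊓ A) + Module.finrank K ↥(F ⊓ D) :=
    Submodule.finrank_sup_add_finrank_inf_eq _ _
  have e2 : Module.finrank K ↥((F ⊓ B) ⊔ (F ⊓ C)) + Module.finrank K ↥((F ⊓ B) ⊓ (F ⊓ C))
      = Module.finrank K ↥(F ⊓ B) + Module.finrank K ↥(F ⊓ C) :=
    Submodule.finrank_sup_add_finrank_inf_eq _ _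
  have dAB : (F ⊓ A) ⊓ (F ⊓ B) = ⊥ :=
    disjoint_iff.mp (hAB.mono inf_le_right inf_le_right)
  have dCD : (F ⊓ C) ⊓ (F ⊓ D) = ⊥ :=
    disjoint_iff.mp (hCD.mono inf_le_right inf_le_right)
  have e3 : Module.finrank K ↥((F ⊓ A) ⊔ (F ⊓ B)) + Module.finrank K ↥((F ⊓ A) ⊓ (F ⊓ B))
      = Module.finrank K ↥(F ⊓ A) + Module.finrank K ↥(F ⊓ B) :=
    Submodule.finrank_sup_add_finrank_inf_eq _ _
  have e4 : Module.finrank K ↥((F ⊓ C) ⊔ (F ⊓ D)) + Module.finrank K ↥((F ⊓ C) ⊓ (F ⊓ D))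
      = Module.finrank K ↥(F ⊓ C) + Module.finrank K ↥(F ⊓ D) :=
    Submodule.finrank_sup_add_finrank_inf_eq _ _
  rw [dAB] at e3; rw [dCD] at e4
  rw [h1] at e1; rw [h2] at e2
  have l3 : Module.finrank K ↥((F ⊓ A) ⊔ (F ⊓ B)) ≤ Module.finrank K ↥F :=
    Submodule.finrank_mono (sup_le inf_le_left inf_le_left)
  have l4 : Module.finrank K ↥((F ⊓ C) ⊔ (F ⊓ D)) ≤ Module.finrank K ↥F :=
    Submodule.finrank_mono (sup_le inf_le_left inf_le_left)
  simp only [finrank_bot] at e3 e4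
  have hz : Module.finrank K ↥((F ⊓ A) ⊓ (F ⊓ D)) = 0 := by omega
  rw [disjoint_iff]
  exact Submodule.finrank_eq_zero.mp hz

/-- Key element-level step: if `F = (F ⊓ A) + (F ⊓ D)`, `F ≤ F'` and `x ∈ F'` lies in
`F + A` or in `F + D`, then `x ∈ (F' ⊓ A) + (F' ⊓ D)`. -/
lemma Fsig.step_aux {K E : Type*} [Field K] [AddCommGroup E] [Module K E]
    {F F' A D : Submodule K E} (hF : F ≤ F')
    (hIH : (F ⊓ A) ⊔ (F ⊓ D) = F) {x : E} (hx' : x ∈ F')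
    (hx : x ∈ F ⊔ A ∨ x ∈ F ⊔ D) :
    x ∈ (F' ⊓ A) ⊔ (F' ⊓ D) := by
  rcases hx with hx | hx
  · obtain ⟨f, hf, a, ha, rfl⟩ := Submodule.mem_sup.mp hx
    rw [← hIH] at hf
    obtain ⟨u, hu, w, hw, rfl⟩ := Submodule.mem_sup.mp hf
    refine Submodule.mem_sup.mpr ⟨u + a, ⟨?_, add_mem hu.2 ha⟩,
      w, ⟨hF hw.1, hw.2⟩, by abel⟩
    have h : u + a = (u + w + a) - w := by abel
    rw [h]; exact sub_mem hx' (hF hw.1)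
  · obtain ⟨f, hf, d, hd, rfl⟩ := Submodule.mem_sup.mp hx
    rw [← hIH] at hf
    obtain ⟨u, hu, w, hw, rfl⟩ := Submodule.mem_sup.mp hf
    refine Submodule.mem_sup.mpr ⟨u, ⟨hF hu.1, hu.2⟩,
      w + d, ⟨?_, add_mem hw.2 hd⟩, by abel⟩
    have h : w + d = (u + w + d) - u := by abel
    rw [h]; exact sub_mem hx' (hF hu.1)

/-- The sum part of the statement, proved by induction on `n`, simultaneously for
both indices `i` (with `i + 1` denoting the other index of `Fin 2`). -/
lemma Fsig.sup_eq {K E : Type*} [Field K] [AddCommGroup E] [Module K E]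
    (V W : Fin 2 → Submodule K E) (σ : Equiv.Perm (Fin 2)) :
    ∀ (n : ℕ) (i : Fin 2),
      (Fsig V W σ n ⊓ V i) ⊔ (Fsig V W σ n ⊓ W (σ (i + 1))) = Fsig V W σ n := by
  intro n
  induction n with
  | zero => intro i; simp [Fsig]
  | succ n ih =>
    intro i
    have hdef : Fsig V W σ (n + 1)
        = ⨆ k : Fin 2, (Fsig V W σ n ⊔ V k) ⊓ (Fsig V W σ n ⊔ W (σ k)) := rfl
    have hF : Fsig V W σ n ≤ Fsig V W σ (n + 1) := by
      rw [hdef]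
      exact le_iSup_of_le i (le_inf le_sup_left le_sup_left)
    refine le_antisymm (sup_le inf_le_left inf_le_left) ?_
    conv_lhs => rw [hdef]
    refine iSup_le fun k => fun x hx => ?_
    have hx' : x ∈ Fsig V W σ (n + 1) := by
      rw [hdef]
      exact le_iSup (fun k => (Fsig V W σ n ⊔ V k) ⊓ (Fsig V W σ n ⊔ W (σ k))) k hx
    have hk : k = i ∨ k = i + 1 := by omega
    rcases hk with rfl | rfl
    · exact Fsig.step_aux hF (ih k) hx' (Or.inl hx.1)
    · exact Fsig.step_aux hF (ih i) hx' (Or.inr hx.2)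

lemma Fsig.perm_other : ∀ σ σ' : Equiv.Perm (Fin 2), σ ≠ σ' → ∀ i, σ' i = σ (i + 1) := by
  decide

lemma Fsig.disj_of_ne {K E : Type*} [Field K] [AddCommGroup E] [Module K E]
    {W : Fin 2 → Submodule K E} (hW : IsCompl (W 0) (W 1)) :
    ∀ a b : Fin 2, a ≠ b → Disjoint (W a) (W b) := by
  intro a b hab
  fin_cases a <;> fin_cases b <;>
    first
      | exact absurd rfl hab
      | exact hW.disjoint
      | exact hW.disjoint.symm

/-- For every permutation `σ` of `{1,2}` (with `σ̄` the other permutation), every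
`i ∈ {1,2}` and every `n`, `F_σ(n) = (F_σ(n) ∩ Vᵢ) ⊕ (F_σ(n) ∩ W_{σ̄(i)})`. -/
theorem stmt11 {K E : Type*} [Field K] [AddCommGroup E] [Module K E]
    [FiniteDimensional K E] (hchar : (2 : K) ≠ 0)
    (V W : Fin 2 → Submodule K E)
    (hV : IsCompl (V 0) (V 1)) (hW : IsCompl (W 0) (W 1)) :
    ∀ σ σ' : Equiv.Perm (Fin 2), σ ≠ σ' →
      ∀ (i : Fin 2) (n : ℕ),
        Disjoint (Fsig V W σ n ⊓ V i) (Fsig V W σ n ⊓ W (σ' i)) ∧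
        (Fsig V W σ n ⊓ V i) ⊔ (Fsig V W σ n ⊓ W (σ' i)) = Fsig V W σ n := by
  intro σ σ' hne i n
  have hσ'i : σ' i = σ (i + 1) := Fsig.perm_other σ σ' hne i
  have hii : i + 1 + 1 = i := by omega
  have h1 : (Fsig V W σ n ⊓ V i) ⊔ (Fsig V W σ n ⊓ W (σ (i + 1))) = Fsig V W σ n :=
    Fsig.sup_eq V W σ n i
  have h2 : (Fsig V W σ n ⊓ V (i + 1)) ⊔ (Fsig V W σ n ⊓ W (σ i)) = Fsig V W σ n := by
    have := Fsig.sup_eq V W σ n (i + 1)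
    rwa [hii] at this
  have hAB : Disjoint (V i) (V (i + 1)) := Fsig.disj_of_ne hV i (i + 1) (by omega)
  have hCD : Disjoint (W (σ i)) (W (σ (i + 1))) :=
    Fsig.disj_of_ne hW (σ i) (σ (i + 1)) (fun h => by
      have : i = i + 1 := σ.injective h
      omega)
  rw [hσ'i]
  exact ⟨Fsig.dim_disjoint hAB hCD h1 h2, h1⟩
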